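/- Suppose a model m(x) = h_s(x_s) + h(x) where h_s is the spurious-coordinate Bayes-optimal classifier satisfying φ(f_s(x_s)·h_s(x_s)) = λ for all x, and h(x) = 0 identically. Then the population gradient of the logistic loss over D_λ with respect to a weight vector w_i of a ReLU neuron in h equals −2λ(1−λ)·E_{x∼D_unif}[f_c(x_c)·a_i·σ'(w_i^⊤x)·x]; consequently it is exactly 4λ(1−λ) times the corresponding gradient when there is no spurious correlation (λ = 1/2). -/

import Mathlib

open scoped Classical

noncomputable section

/-- Boolean vectors of length `m`. -/
abbrev BVec (m : ℕ) := Fin m → Bool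

/-- The boolean hypercube split into core, spurious and noise blocks. -/
abbrev Cube (c s u : ℕ) := BVec c × BVec s × BVec u

/-- Uniform probability mass on the hypercube. -/
def pUnif (c s u : ℕ) : Cube c s u → ℝ := fun _ => ((2 : ℝ) ^ (c + s + u))⁻¹

/-- `D_same`: uniform conditioned on the core and spurious features agreeing. -/
def pSame (c s u : ℕ) (fc : BVec c → ℝ) (fs : BVec s → ℝ) : Cube c s u → ℝ := fun x =>
  if fc x.1 = fs x.2.1 then
    pUnif c s u x / (∑ y : Cube c s u, if fc y.1 = fs y.2.1 then pUnif c s u y else 0)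
  else 0

/-- `D_diff`: uniform conditioned on the core and spurious features disagreeing. -/
def pDiff (c s u : ℕ) (fc : BVec c → ℝ) (fs : BVec s → ℝ) : Cube c s u → ℝ := fun x =>
  if fc x.1 ≠ fs x.2.1 then
    pUnif c s u x / (∑ y : Cube c s u, if fc y.1 ≠ fs y.2.1 then pUnif c s u y else 0)
  else 0

/-- `D_λ := λ·D_same + (1−λ)·D_diff`. -/
def pLam (c s u : ℕ) (fc : BVec c → ℝ) (fs : BVec s → ℝ) (lam : ℝ) : Cube c s u → ℝ :=
  fun x => lam * pSame c s u fc fs x + (1 - lam) * pDiff c s u fc fs x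

/-- The sigmoid function. -/
def sigmoid (t : ℝ) : ℝ := (1 + Real.exp (-t))⁻¹

/-- Subgradient of the ReLU. -/
def reluDeriv (t : ℝ) : ℝ := if 0 < t then 1 else 0

/-- The real value of a boolean bit: `true ↦ 1`, `false ↦ -1`. -/
def bval (b : Bool) : ℝ := if b then 1 else -1

/-- The `j`-th real coordinate of a point of the cube. -/
def coordVal (c s u : ℕ) (x : Cube c s u) : Fin c ⊕ Fin s ⊕ Fin u → ℝ
  | Sum.inl i => bval (x.1 i)
  | Sum.inr (Sum.inl i) => bval (x.2.1 i)
  | Sum.inr (Sum.inr i) => bval (x.2.2 i)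

/-- Inner product of a weight vector with a cube point. -/
def dotW (c s u : ℕ) (w : Fin c ⊕ Fin s ⊕ Fin u → ℝ) (x : Cube c s u) : ℝ :=
  ∑ j, w j * coordVal c s u x j

/-- Population gradient (coordinate `j`) over `D_λ` of the logistic loss of the model
`m(x) = h_s(x_s) + h(x)` with `h ≡ 0`, with respect to the weight vector of a ReLU neuron
`a·σ(w^⊤x)` of `h`; the per-sample gradient is `−y·(1−φ(y·h_s(x_s)))·a·σ'(w^⊤x)·x_j`. -/
def gradExpr (c s u : ℕ) (fc : BVec c → ℝ) (fs : BVec s → ℝ) (lam : ℝ)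
    (hs : BVec s → ℝ) (a : ℝ) (w : Fin c ⊕ Fin s ⊕ Fin u → ℝ)
    (j : Fin c ⊕ Fin s ⊕ Fin u) : ℝ :=
  ∑ x : Cube c s u,
    pLam c s u fc fs lam x *
      (-(fc x.1) * (1 - sigmoid (fc x.1 * hs x.2.1)) * a * reluDeriv (dotW c s u w x) *
        coordVal c s u x j)

lemma sigmoid_zero : sigmoid 0 = 1/2 := by simp [sigmoid]; norm_num

lemma sigmoid_neg (t : ℝ) : sigmoid (-t) = 1 - sigmoid t := by
  unfold sigmoid
  have h1 : (0:ℝ) < 1 + Real.exp (-t) := by positivity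
  have h2 : (0:ℝ) < 1 + Real.exp t := by positivity
  have he : Real.exp (-t) * Real.exp t = 1 := by rw [← Real.exp_add]; simp
  rw [neg_neg]
  field_simp
  nlinarith [he]

lemma sum_pUnif (c s u : ℕ) : ∑ x : Cube c s u, pUnif c s u x = 1 := by
  simp [pUnif, Finset.sum_const, Finset.card_univ]
  field_simp
  rw [pow_add, pow_add]

lemma Zsame_eq (c s u : ℕ) (fc : BVec c → ℝ) (fs : BVec s → ℝ)
    (hfc : ∀ v, fc v = 1 ∨ fc v = -1) (hfs : ∀ v, fs v = 1 ∨ fs v = -1)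
    (hfc_unb : (∑ v : BVec c, fc v) = 0) :
    (∑ y : Cube c s u, if fc y.1 = fs y.2.1 then pUnif c s u y else 0) = 1/2 := by
  have hpt : ∀ y : Cube c s u, (if fc y.1 = fs y.2.1 then pUnif c s u y else 0)
      = pUnif c s u y * (1/2) + ((2:ℝ)^(c+s+u))⁻¹ * (1/2) * (fc y.1 * fs y.2.1) := by
    intro y
    rcases hfc y.1 with h1|h1 <;> rcases hfs y.2.1 with h2|h2 <;>
      rw [h1, h2] <;> norm_num [pUnif] <;> ring
  rw [Finset.sum_congr rfl (fun y _ => hpt y), Finset.sum_add_distrib,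
    ← Finset.sum_mul, sum_pUnif, ← Finset.mul_sum]
  have hzero : ∑ y : Cube c s u, fc y.1 * fs y.2.1 = 0 := by
    rw [Fintype.sum_prod_type]
    have h1 : ∀ a : BVec c, ∑ b : BVec s × BVec u, fc a * fs b.1
        = fc a * ∑ b : BVec s × BVec u, fs b.1 := fun a => (Finset.mul_sum _ _ _).symm
    simp_rw [h1, ← Finset.sum_mul, hfc_unb, zero_mul]
  rw [hzero]
  ring

lemma Zdiff_eq (c s u : ℕ) (fc : BVec c → ℝ) (fs : BVec s → ℝ)
    (hfc : ∀ v, fc v = 1 ∨ fc v = -1) (hfs : ∀ v, fs v = 1 ∨ fs v = -1)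
    (hfc_unb : (∑ v : BVec c, fc v) = 0) :
    (∑ y : Cube c s u, if fc y.1 ≠ fs y.2.1 then pUnif c s u y else 0) = 1/2 := by
  have hpt : ∀ y : Cube c s u, (if fc y.1 ≠ fs y.2.1 then pUnif c s u y else 0)
      = pUnif c s u y - (if fc y.1 = fs y.2.1 then pUnif c s u y else 0) := by
    intro y; by_cases h : fc y.1 = fs y.2.1 <;> simp [h]
  rw [Finset.sum_congr rfl (fun y _ => hpt y), Finset.sum_sub_distrib, sum_pUnif,
    Zsame_eq c s u fc fs hfc hfs hfc_unb]
  norm_num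

/-- If `h_s` is the spurious Bayes-optimal classifier (`φ(f_s·h_s) = λ`) and `h ≡ 0`, the
population gradient w.r.t. the weights of a neuron of `h` equals
`−2λ(1−λ)·E_unif[f_c·a·σ'(w^⊤x)·x]`, i.e. exactly `4λ(1−λ)` times the gradient at `λ = 1/2`
(no spurious correlation, where the Bayes-optimal spurious part is `0`). -/
theorem grad_slowdown (c s u : ℕ) (fc : BVec c → ℝ) (fs : BVec s → ℝ)
    (hfc : ∀ v, fc v = 1 ∨ fc v = -1) (hfs : ∀ v, fs v = 1 ∨ fs v = -1)
    (hfc_unb : (∑ v : BVec c, fc v) = 0) (hfs_unb : (∑ v : BVec s, fs v) = 0)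
    (hpos_same : 0 < ∑ y : Cube c s u, if fc y.1 = fs y.2.1 then pUnif c s u y else 0)
    (hpos_diff : 0 < ∑ y : Cube c s u, if fc y.1 ≠ fs y.2.1 then pUnif c s u y else 0)
    (lam : ℝ) (hlam₁ : 1 / 2 ≤ lam) (hlam₂ : lam < 1)
    (hs : BVec s → ℝ) (hbayes : ∀ v, sigmoid (fs v * hs v) = lam)
    (a : ℝ) (w : Fin c ⊕ Fin s ⊕ Fin u → ℝ) :
    ∀ j : Fin c ⊕ Fin s ⊕ Fin u,
      gradExpr c s u fc fs lam hs a w j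
          = -2 * lam * (1 - lam) *
              ∑ x : Cube c s u,
                pUnif c s u x *
                  (fc x.1 * a * reluDeriv (dotW c s u w x) * coordVal c s u x j) ∧
      gradExpr c s u fc fs lam hs a w j
          = 4 * lam * (1 - lam) * gradExpr c s u fc fs (1 / 2) (fun _ => 0) a w j := by
  intro j
  have ZS := Zsame_eq c s u fc fs hfc hfs hfc_unb
  have ZD := Zdiff_eq c s u fc fs hfc hfs hfc_unb
  set S := ∑ x : Cube c s u,
      pUnif c s u x * (fc x.1 * a * reluDeriv (dotW c s u w x) * coordVal c s u x j) with hS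
  have key : ∀ x : Cube c s u, pLam c s u fc fs lam x *
      (-(fc x.1) * (1 - sigmoid (fc x.1 * hs x.2.1)) * a * reluDeriv (dotW c s u w x) *
        coordVal c s u x j)
      = (-2*lam*(1-lam)) * (pUnif c s u x *
          (fc x.1 * a * reluDeriv (dotW c s u w x) * coordVal c s u x j)) := by
    intro x
    unfold pLam pSame pDiff
    rw [ZS, ZD]
    by_cases h : fc x.1 = fs x.2.1
    · rw [if_pos h, if_neg (not_not_intro h), h, hbayes]
      ring
    · rw [if_neg h, if_pos h]
      have hx : fc x.1 = -fs x.2.1 := by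
        rcases hfc x.1 with h1|h1 <;> rcases hfs x.2.1 with h2|h2 <;>
          rw [h1, h2] at h ⊢ <;> norm_num at h <;> norm_num
      have harg : (-fs x.2.1) * hs x.2.1 = -(fs x.2.1 * hs x.2.1) := by ring
      rw [hx, harg, sigmoid_neg, hbayes]
      ring
  have part1 : gradExpr c s u fc fs lam hs a w j = -2 * lam * (1 - lam) * S := by
    unfold gradExpr
    rw [Finset.sum_congr rfl (fun x _ => key x), ← Finset.mul_sum, hS]
  refine ⟨part1, ?_⟩
  have key2 : ∀ x : Cube c s u, pLam c s u fc fs (1/2) x *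
      (-(fc x.1) * (1 - sigmoid (fc x.1 * (fun _ : BVec s => (0:ℝ)) x.2.1)) * a *
        reluDeriv (dotW c s u w x) * coordVal c s u x j)
      = (-(1/2)) * (pUnif c s u x *
          (fc x.1 * a * reluDeriv (dotW c s u w x) * coordVal c s u x j)) := by
    intro x
    have hσ : sigmoid (fc x.1 * (fun _ : BVec s => (0:ℝ)) x.2.1) = 1/2 := by
      simp [sigmoid_zero]
    rw [hσ]
    unfold pLam pSame pDiff
    rw [ZS, ZD]
    by_cases h : fc x.1 = fs x.2.1
    · rw [if_pos h, if_neg (not_not_intro h)]; ring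
    · rw [if_neg h, if_pos h]; ring
  have part2 : gradExpr c s u fc fs (1/2) (fun _ => 0) a w j = (-(1/2)) * S := by
    unfold gradExpr
    rw [Finset.sum_congr rfl (fun x _ => key2 x), ← Finset.mul_sum, hS]
  rw [part1, part2]
  ring
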